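/- Let R be a finite, reduced, crystallographic root system spanning a finite-dimensional real inner product space V, with base S = {α₁,…,α_n}, positive roots R⁺, and Weyl group W generated by the simple reflections s_i = s_{α_i}. Fix j ∈ {1,…,n}. Let (i₁, i₂, …, i_t) be a sequence of indices in {1,…,n}, put w_l := s_{i_l} ⋯ s_{i₂} s_{i₁} for 1 ≤ l ≤ t, and define the roots α̃_0 := α_{i₁} and α̃_l := s_{i₁} s_{i₂} ⋯ s_{i_l}(α_{i_{l+1}}) for 1 ≤ l < t. Then the following are equivalent: (a) for every 0 ≤ l < t, the coefficient of α_j in the expansion of α̃_l in the base S is strictly positive; (b) for every 1 ≤ l ≤ t, the element w_l lies in W^j and the expression s_{i_l} ⋯ s_{i₁} is reduced, i.e. l(w_l) = l. -/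

import Mathlib

open scoped RealInnerProductSpace

/-- A finite, reduced, crystallographic root system `R` spanning a
finite-dimensional real inner product space `V`, together with a base `S`
(the simple roots), the corresponding set `Rpos` of positive roots,
the integer coefficients `coeff α γ` of a root `α` in the base `S`,
the integer coefficients `ccoeff α γ` of the coroot `α^∨ = (2/(α,α))•α` of a
positive root in the simple coroots, and the integer Cartan pairings
`cartan α β = ⟨α, β^∨⟩ = 2(α,β)/(β,β)`. -/
structure RootSystemWithBase (V : Type*) [NormedAddCommGroup V]
    [InnerProductSpace ℝ V] [FiniteDimensional ℝ V] where
  R : Finset V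
  S : Finset V
  Rpos : Finset V
  coeff : V → V → ℤ
  ccoeff : V → V → ℤ
  cartan : V → V → ℤ
  root_ne_zero : ∀ α ∈ R, α ≠ (0 : V)
  span_top : Submodule.span ℝ (R : Set V) = ⊤
  neg_mem : ∀ α ∈ R, -α ∈ R
  reduced : ∀ α ∈ R, ∀ c : ℝ, c • α ∈ (R : Set V) → c = 1 ∨ c = -1
  cartan_eq : ∀ α ∈ R, ∀ β ∈ R, (cartan α β : ℝ) = 2 * ⟪α, β⟫ / ⟪β, β⟫
  reflect_mem : ∀ α ∈ R, ∀ β ∈ R, β - cartan β α • α ∈ R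
  S_subset : ∀ γ ∈ S, γ ∈ Rpos
  Rpos_subset : ∀ α ∈ Rpos, α ∈ R
  S_indep : LinearIndependent ℝ (Subtype.val : {x // x ∈ S} → V)
  root_eq_sum : ∀ α ∈ R, α = ∑ γ ∈ S, coeff α γ • γ
  mem_Rpos_iff : ∀ α ∈ R, (α ∈ Rpos ↔ ∀ γ ∈ S, 0 ≤ coeff α γ)
  pos_or_neg : ∀ α ∈ R, α ∈ Rpos ∨ -α ∈ Rpos
  coroot_eq_sum : ∀ α ∈ Rpos,
    (2 / ⟪α, α⟫) • α = ∑ γ ∈ S, ccoeff α γ • ((2 / ⟪γ, γ⟫) • γ)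
  ccoeff_nonneg : ∀ α ∈ Rpos, ∀ γ ∈ S, 0 ≤ ccoeff α γ

namespace RootSystemWithBase

variable {V : Type*} [NormedAddCommGroup V] [InnerProductSpace ℝ V]
  [FiniteDimensional ℝ V] (D : RootSystemWithBase V)

/-- The coroot `α^∨ = 2α/(α,α)` of a root `α`. -/
noncomputable def coroot (_D : RootSystemWithBase V) (α : V) : V := (2 / ⟪α, α⟫) • α

/-- The height of the coroot of a positive root: the sum of its coefficients
in the basis of simple coroots. -/
def ht (α : V) : ℤ := ∑ γ ∈ D.S, D.ccoeff α γ

open Classical in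
/-- `R_P⁺`: the positive roots that are nonnegative integer combinations of
the elements of `SP`. -/
noncomputable def RP (SP : Finset V) : Finset V :=
  D.Rpos.filter fun α => ∃ c : V → ℤ, (∀ γ, 0 ≤ c γ) ∧ α = ∑ γ ∈ SP, c γ • γ

/-- `n_β := 2 - ⟨Σ_{α ∈ R_P⁺} α, β^∨⟩`. -/
noncomputable def n (SP : Finset V) (β : V) : ℤ := 2 - ∑ α ∈ D.RP SP, D.cartan α β

/-- The reflection `s_α` in a root `α`, as a map `V → V`. -/
noncomputable def refl (_D : RootSystemWithBase V) (α : V) (x : V) : V := x - (2 * ⟪x, α⟫ / ⟪α, α⟫) • α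

/-- `w : V → V` can be written as a composition of `t` simple reflections. -/
noncomputable def IsWord (w : V → V) (t : ℕ) : Prop :=
  ∃ b : Fin t → V, (∀ i, b i ∈ D.S) ∧
    w = (List.ofFn fun i => D.refl (b i)).foldr (· ∘ ·) id

/-- Membership in the Weyl group `W` (as a group of maps `V → V`): `w` is a
composition of simple reflections. -/
noncomputable def MemW (w : V → V) : Prop := ∃ t, D.IsWord w t

/-- The length of an element of the Weyl group: the smallest number of simple
reflections needed to express it. -/
noncomputable def len (w : V → V) : ℕ := sInf {t | D.IsWord w t}

/-- The inversion set `I(w) = {α ∈ R⁺ : w(α) ∈ -R⁺}`. -/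
def inversions (w : V → V) : Set V := {α | α ∈ D.Rpos ∧ -(w α) ∈ D.Rpos}

/-- `W^j = {w ∈ W : I(w) ⊆ R⁺ ∖ R_j}`, the minimal length representatives of
`W/W_j`, where `R_j` is the set of roots lying in the span of `S ∖ {β}`. -/
noncomputable def Wj (β : V) : Set (V → V) :=
  {w | D.MemW w ∧
    ∀ α ∈ D.inversions w, α ∉ Submodule.span ℝ ((D.S : Set V) \ {β})}


end RootSystemWithBase


namespace RootSystemWithBase

variable {V : Type*} [NormedAddCommGroup V] [InnerProductSpace ℝ V]
  [FiniteDimensional ℝ V] (D : RootSystemWithBase V)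

/-! ### Basic reflection lemmas -/

lemma refl_add (α x y : V) : D.refl α (x + y) = D.refl α x + D.refl α y := by
  simp only [refl, inner_add_left]
  rw [mul_add, add_div, add_smul]
  abel

lemma refl_smul (α : V) (c : ℝ) (x : V) : D.refl α (c • x) = c • D.refl α x := by
  simp only [refl, real_inner_smul_left, smul_sub, smul_smul]
  ring_nf

lemma refl_neg (α x : V) : D.refl α (-x) = - D.refl α x := by
  have := D.refl_smul α (-1) x
  simpa using this

lemma refl_inner (α x y : V) : ⟪D.refl α x, D.refl α y⟫ = ⟪x, y⟫ := by
  by_cases hc : ⟪α, α⟫ = (0:ℝ)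
  · simp [refl, inner_self_eq_zero.mp hc]
  · simp only [refl, inner_sub_left, inner_sub_right, real_inner_smul_left,
      real_inner_smul_right]
    rw [real_inner_comm y α, real_inner_comm α x]
    field_simp
    ring

lemma refl_refl (α x : V) : D.refl α (D.refl α x) = x := by
  by_cases hc : ⟪α, α⟫ = (0:ℝ)
  · simp [refl, inner_self_eq_zero.mp hc]
  · simp only [refl, inner_sub_left, real_inner_smul_left]
    rw [real_inner_comm α x] at *
    field_simp
    ring_nf
    rw [mul_comm]
    module

lemma refl_self (α : V) (hc : ⟪α, α⟫ ≠ (0:ℝ)) : D.refl α α = -α := by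
  simp only [refl]
  rw [mul_div_assoc, div_self hc]
  module

lemma refl_conj (α : V) (g : V → V)
    (hadd : ∀ x y, g (x + y) = g x + g y)
    (hsmul : ∀ (c : ℝ) x, g (c • x) = c • g x)
    (hinner : ∀ x y, ⟪g x, g y⟫ = ⟪x, y⟫) (x : V) :
    g (D.refl α x) = D.refl (g α) (g x) := by
  have hs : g (x - (2 * ⟪x, α⟫ / ⟪α, α⟫) • α)
      = g x - (2 * ⟪x, α⟫ / ⟪α, α⟫) • g α := by
    rw [sub_eq_add_neg, hadd, ← neg_one_smul ℝ ((2 * ⟪x, α⟫ / ⟪α, α⟫) • α), hsmul,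
      hsmul]
    module
  simp only [refl, hs, hinner]

lemma inner_self_ne {α : V} (hα : α ∈ D.R) : ⟪α, α⟫ ≠ (0:ℝ) := by
  simpa using D.root_ne_zero α hα

lemma refl_root {α β : V} (hα : α ∈ D.R) (hβ : β ∈ D.R) : D.refl α β ∈ D.R := by
  have h := D.reflect_mem α hα β hβ
  have : D.refl α β = β - D.cartan β α • α := by
    simp only [refl]
    rw [← D.cartan_eq β hβ α hα, Int.cast_smul_eq_zsmul]
  rwa [this]

/-! ### Coefficient lemmas -/

lemma coeff_unique {f g : V → ℝ}
    (h : ∑ γ ∈ D.S, f γ • γ = ∑ γ ∈ D.S, g γ • γ) : ∀ γ ∈ D.S, f γ = g γ := by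
  intro γ hγ
  have hz : ∑ i : {x // x ∈ D.S}, (f i.val - g i.val) • i.val = 0 := by
    rw [Finset.sum_coe_sort D.S (fun x => (f x - g x) • x)]
    simp only [sub_smul, Finset.sum_sub_distrib, h, sub_self]
  have := linearIndependent_iff'.mp D.S_indep Finset.univ
    (fun i => f i.val - g i.val) hz ⟨γ, hγ⟩ (Finset.mem_univ _)
  have h0 : f γ - g γ = 0 := this
  linarith

lemma root_eq_sum_real {α : V} (hα : α ∈ D.R) :
    α = ∑ γ ∈ D.S, (D.coeff α γ : ℝ) • γ := by
  conv_lhs => rw [D.root_eq_sum α hα]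
  exact Finset.sum_congr rfl fun γ _ => by rw [Int.cast_smul_eq_zsmul]

lemma coeff_neg {α : V} (hα : α ∈ D.R) : ∀ γ ∈ D.S, D.coeff (-α) γ = - D.coeff α γ := by
  intro γ hγ
  have h1 : ∑ γ ∈ D.S, (D.coeff (-α) γ : ℝ) • γ = ∑ γ ∈ D.S, (-(D.coeff α γ) : ℝ) • γ := by
    rw [← D.root_eq_sum_real (D.neg_mem α hα),
      show (-α : V) = -(∑ γ ∈ D.S, (D.coeff α γ : ℝ) • γ) from by
        rw [← D.root_eq_sum_real hα],
      ← Finset.sum_neg_distrib]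
    exact Finset.sum_congr rfl fun γ _ => by rw [neg_smul]
  have := D.coeff_unique h1 γ hγ
  exact_mod_cast this

lemma neg_not_mem_Rpos {α : V} (hα : α ∈ D.Rpos) : -α ∉ D.Rpos := by
  intro hneg
  have hαR := D.Rpos_subset α hα
  have h1 := (D.mem_Rpos_iff α hαR).mp hα
  have h2 := (D.mem_Rpos_iff (-α) (D.neg_mem α hαR)).mp hneg
  have hz : ∀ γ ∈ D.S, D.coeff α γ = 0 := by
    intro γ hγ
    have ha := h2 γ hγ
    have hb := h1 γ hγ
    rw [D.coeff_neg hαR γ hγ] at ha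
    omega
  apply D.root_ne_zero α hαR
  rw [D.root_eq_sum α hαR]
  exact Finset.sum_eq_zero fun γ hγ => by rw [hz γ hγ, zero_smul]

lemma mem_Rpos_of_coeff_pos {α δ : V} (hα : α ∈ D.R) (hδ : δ ∈ D.S)
    (h : 0 < D.coeff α δ) : α ∈ D.Rpos := by
  rcases D.pos_or_neg α hα with h1 | h1
  · exact h1
  · exfalso
    have := (D.mem_Rpos_iff (-α) (D.neg_mem α hα)).mp h1 δ hδ
    rw [D.coeff_neg hα δ hδ] at this
    omega

lemma coeff_zero_of_mem_span {α β0 : V} (hα : α ∈ D.R) (hβ0 : β0 ∈ D.S)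
    (h : α ∈ Submodule.span ℝ ((D.S : Set V) \ {β0})) : D.coeff α β0 = 0 := by
  classical
  rw [← Finset.coe_erase] at h
  obtain ⟨f, -, hf⟩ := Submodule.mem_span_finset.mp h
  set g : V → ℝ := fun γ => if γ = β0 then 0 else f γ with hg
  have hsum : ∑ γ ∈ D.S, g γ • γ = α := by
    rw [← Finset.add_sum_erase _ _ hβ0]
    have : g β0 = 0 := by simp [hg]
    rw [this, zero_smul, zero_add, ← hf]
    refine Finset.sum_congr rfl fun γ hγ => ?_
    have : γ ≠ β0 := Finset.ne_of_mem_erase hγ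
    simp [hg, this]
  have := D.coeff_unique (f := fun γ => (D.coeff α γ : ℝ)) (g := g)
    (by rw [hsum, ← D.root_eq_sum_real hα]) β0 hβ0
  rw [hg] at this
  simp at this
  exact_mod_cast this

lemma mem_span_of_coeff_zero {α β0 : V} (hα : α ∈ D.R) (hβ0 : β0 ∈ D.S)
    (h : D.coeff α β0 = 0) : α ∈ Submodule.span ℝ ((D.S : Set V) \ {β0}) := by
  classical
  rw [D.root_eq_sum α hα, ← Finset.add_sum_erase _ _ hβ0, h, zero_smul, zero_add]
  refine Submodule.sum_mem _ fun γ hγ => ?_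
  rw [← Int.cast_smul_eq_zsmul ℝ]
  refine Submodule.smul_mem _ _ ?_
  apply Submodule.subset_span
  rw [← Finset.coe_erase]
  exact_mod_cast hγ

/-! ### The key simple-reflection lemma -/

lemma refl_simple_pos {γ α : V} (hγ : γ ∈ D.S) (hα : α ∈ D.Rpos) (hne : α ≠ γ) :
    D.refl γ α ∈ D.Rpos := by
  classical
  have hγR : γ ∈ D.R := D.Rpos_subset γ (D.S_subset γ hγ)
  have hαR : α ∈ D.R := D.Rpos_subset α hα
  have hδ : ∃ δ ∈ D.S, δ ≠ γ ∧ 0 < D.coeff α δ := by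
    by_contra hcon
    push_neg at hcon
    have hzero : ∀ δ ∈ D.S, δ ≠ γ → D.coeff α δ = 0 := by
      intro δ hδ hδγ
      have h1 := (D.mem_Rpos_iff α hαR).mp hα δ hδ
      have h2 := hcon δ hδ hδγ
      omega
    have hαeq : α = (D.coeff α γ : ℝ) • γ := by
      conv_lhs => rw [D.root_eq_sum_real hαR]
      rw [Finset.sum_eq_single γ]
      · intro δ hδ hδγ
        rw [hzero δ hδ hδγ]; simp
      · intro h; exact absurd hγ h
    have hmem : (D.coeff α γ : ℝ) • γ ∈ (D.R : Set V) := by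
      rw [← hαeq]; exact_mod_cast hαR
    rcases D.reduced γ hγR _ hmem with h1 | h1
    · exact hne (by rw [hαeq, h1, one_smul])
    · have : D.coeff α γ = -1 := by exact_mod_cast h1
      have := (D.mem_Rpos_iff α hαR).mp hα γ hγ
      omega
  obtain ⟨δ, hδS, hδne, hδpos⟩ := hδ
  have hrR : D.refl γ α ∈ D.R := D.refl_root hγR hαR
  set c : ℝ := (D.cartan α γ : ℝ) with hc
  have hexp : ∑ γ' ∈ D.S,
      (if γ' = γ then (D.coeff α γ' : ℝ) - c else (D.coeff α γ' : ℝ)) • γ'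
        = D.refl γ α := by
    have h1 : D.refl γ α = α - c • γ := by
      simp only [refl]
      rw [hc, D.cartan_eq α hαR γ hγR]
    rw [h1]
    conv_rhs => rw [D.root_eq_sum_real hαR]
    have hstep : ∀ γ' ∈ D.S,
        (if γ' = γ then (D.coeff α γ' : ℝ) - c else (D.coeff α γ' : ℝ)) • γ'
          = (D.coeff α γ' : ℝ) • γ' - (if γ' = γ then c • γ' else 0) := by
      intro γ' _
      split_ifs with h
      · rw [sub_smul]
      · rw [sub_zero]
    rw [Finset.sum_congr rfl hstep, Finset.sum_sub_distrib,
      Finset.sum_ite_eq' D.S γ (fun γ' => c • γ'), if_pos hγ]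
  have hcoeff : (D.coeff (D.refl γ α) δ : ℝ)
      = if δ = γ then (D.coeff α δ : ℝ) - c else (D.coeff α δ : ℝ) := by
    refine D.coeff_unique (f := fun γ' => (D.coeff (D.refl γ α) γ' : ℝ))
      (g := fun γ' => if γ' = γ then (D.coeff α γ' : ℝ) - c else (D.coeff α γ' : ℝ))
      ?_ δ hδS
    rw [hexp, ← D.root_eq_sum_real hrR]
  rw [if_neg hδne] at hcoeff
  have : D.coeff (D.refl γ α) δ = D.coeff α δ := by exact_mod_cast hcoeff
  exact D.mem_Rpos_of_coeff_pos hrR hδS (this ▸ hδpos)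

/-! ### Words -/

/-- The composition of the reflections in the roots of a list. -/
noncomputable def P (bs : List V) : V → V := bs.foldr (fun γ f => D.refl γ ∘ f) id

@[simp] lemma P_nil : D.P [] = id := rfl

lemma P_cons (γ : V) (bs : List V) : D.P (γ :: bs) = D.refl γ ∘ D.P bs := rfl

lemma P_append (xs ys : List V) : D.P (xs ++ ys) = D.P xs ∘ D.P ys := by
  induction xs with
  | nil => simp
  | cons γ tl ih => rw [List.cons_append, P_cons, P_cons, ih]; rfl

lemma P_add (bs : List V) (x y : V) : D.P bs (x + y) = D.P bs x + D.P bs y := by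
  induction bs with
  | nil => rfl
  | cons γ tl ih => rw [P_cons]; simp only [Function.comp_apply, ih, D.refl_add]

lemma P_smul (bs : List V) (c : ℝ) (x : V) : D.P bs (c • x) = c • D.P bs x := by
  induction bs with
  | nil => rfl
  | cons γ tl ih => rw [P_cons]; simp only [Function.comp_apply, ih, D.refl_smul]

lemma P_neg (bs : List V) (x : V) : D.P bs (-x) = - D.P bs x := by
  have := D.P_smul bs (-1) x
  simpa using this

lemma P_inner (bs : List V) (x y : V) : ⟪D.P bs x, D.P bs y⟫ = ⟪x, y⟫ := by
  induction bs with
  | nil => rfl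
  | cons γ tl ih => rw [P_cons]; simp only [Function.comp_apply, D.refl_inner, ih]

lemma P_root {bs : List V} (hbs : ∀ γ ∈ bs, γ ∈ D.R) {x : V} (hx : x ∈ D.R) :
    D.P bs x ∈ D.R := by
  induction bs with
  | nil => exact hx
  | cons γ tl ih =>
      rw [P_cons]
      exact D.refl_root (hbs γ List.mem_cons_self)
        (ih fun γ' h => hbs γ' (List.mem_cons_of_mem γ h))

lemma P_inv (bs : List V) (x : V) : D.P bs.reverse (D.P bs x) = x := by
  induction bs generalizing x with
  | nil => rfl
  | cons γ tl ih =>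
      rw [List.reverse_cons, P_cons, P_append, Function.comp_apply,
        Function.comp_apply]
      have : D.P [γ] (D.refl γ (D.P tl x)) = D.P tl x := by
        rw [P_cons]; simp [D.refl_refl]
      rw [this, ih]

lemma P_inv' (bs : List V) (x : V) : D.P bs (D.P bs.reverse x) = x := by
  have := D.P_inv bs.reverse x
  rwa [List.reverse_reverse] at this

lemma P_eq_foldr (bs : List V) :
    D.P bs = (bs.map D.refl).foldr (· ∘ ·) id := by
  induction bs with
  | nil => rfl
  | cons γ tl ih => rw [P_cons, List.map_cons, List.foldr_cons, ih]

lemma isWord_P {bs : List V} (hbs : ∀ γ ∈ bs, γ ∈ D.S) :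
    D.IsWord (D.P bs) bs.length := by
  refine ⟨fun i => bs.get i, fun i => hbs _ (List.get_mem bs i), ?_⟩
  rw [P_eq_foldr]
  congr 1
  conv_lhs => rw [← List.ofFn_get bs]
  rw [List.map_ofFn]
  rfl

lemma exists_list_of_isWord {g : V → V} {t : ℕ} (h : D.IsWord g t) :
    ∃ bs : List V, bs.length = t ∧ (∀ γ ∈ bs, γ ∈ D.S) ∧ g = D.P bs := by
  obtain ⟨b, hb, hg⟩ := h
  refine ⟨List.ofFn b, List.length_ofFn, ?_, ?_⟩
  · intro γ hγ
    obtain ⟨i, rfl⟩ := List.mem_ofFn.mp hγ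
    exact hb i
  · rw [hg, P_eq_foldr]
    congr 1
    rw [List.map_ofFn]
    rfl

lemma len_le_of_P {bs : List V} (hbs : ∀ γ ∈ bs, γ ∈ D.S) :
    D.len (D.P bs) ≤ bs.length :=
  Nat.sInf_le (D.isWord_P hbs)

/-! ### Inversions as a finset -/

open Classical in
/-- The inversion set as a finset. -/
noncomputable def invF (w : V → V) : Finset V :=
  D.Rpos.filter fun α => -(w α) ∈ D.Rpos

lemma mem_invF {w : V → V} {α : V} :
    α ∈ D.invF w ↔ α ∈ D.Rpos ∧ -(w α) ∈ D.Rpos := by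
  classical
  simp [invF]

lemma inversions_eq (w : V → V) : D.inversions w = ↑(D.invF w) := by
  ext α
  simp [inversions, mem_invF]

@[simp] lemma invF_id : D.invF id = ∅ := by
  ext α
  simp only [mem_invF, id_eq, Finset.notMem_empty, iff_false, not_and]
  exact fun h => D.neg_not_mem_Rpos h

lemma mem_invF_step {bs : List V} (hbs : ∀ γ' ∈ bs, γ' ∈ D.S) {γ : V} (hγ : γ ∈ D.S)
    (α : V) :
    α ∈ D.invF (D.refl γ ∘ D.P bs) ↔
      (α ∈ D.Rpos ∧ α = D.P bs.reverse γ) ∨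
      (α ∈ D.invF (D.P bs) ∧ α ≠ -(D.P bs.reverse γ)) := by
  have hbsR : ∀ γ' ∈ bs, γ' ∈ D.R := fun γ' h =>
    D.Rpos_subset γ' (D.S_subset γ' (hbs γ' h))
  have hγpos : γ ∈ D.Rpos := D.S_subset γ hγ
  have hγR : γ ∈ D.R := D.Rpos_subset γ hγpos
  constructor
  · rintro h
    rw [mem_invF] at h
    obtain ⟨hα, hinv⟩ := h
    have hαR : α ∈ D.R := D.Rpos_subset α hα
    have hβR : D.P bs α ∈ D.R := D.P_root hbsR hαR
    simp only [Function.comp_apply] at hinv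
    by_cases hβγ : D.P bs α = γ
    · left
      refine ⟨hα, ?_⟩
      rw [← hβγ, D.P_inv]
    · right
      have hβneg : -(D.P bs α) ∈ D.Rpos := by
        rcases D.pos_or_neg _ hβR with h1 | h1
        · exfalso
          have := D.refl_simple_pos hγ h1 hβγ
          exact D.neg_not_mem_Rpos this hinv
        · exact h1
      refine ⟨D.mem_invF.mpr ⟨hα, hβneg⟩, ?_⟩
      intro heq
      have : D.P bs α = -γ := by
        have := congrArg (D.P bs) heq
        rw [D.P_neg, D.P_inv'] at this
        rw [this]
      rw [this, D.refl_neg, D.refl_self γ (D.inner_self_ne hγR), neg_neg] at hinv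
      exact D.neg_not_mem_Rpos hγpos hinv
  · rintro (⟨hα, rfl⟩ | ⟨hα, hne⟩)
    · rw [mem_invF]
      refine ⟨hα, ?_⟩
      simp only [Function.comp_apply, D.P_inv']
      rw [D.refl_self γ (D.inner_self_ne hγR), neg_neg]
      exact hγpos
    · rw [mem_invF] at hα ⊢
      obtain ⟨hα1, hα2⟩ := hα
      refine ⟨hα1, ?_⟩
      simp only [Function.comp_apply]
      have hβne : -(D.P bs α) ≠ γ := by
        intro heq
        apply hne
        have := congrArg (D.P bs.reverse) heq
        rw [← D.P_neg, D.P_inv] at this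
        rw [← this, neg_neg]
      have := D.refl_simple_pos hγ hα2 hβne
      rwa [D.refl_neg] at this
      
open Classical in
lemma invF_insert {bs : List V} (hbs : ∀ γ' ∈ bs, γ' ∈ D.S) {γ : V} (hγ : γ ∈ D.S)
    (hpos : D.P bs.reverse γ ∈ D.Rpos) :
    D.invF (D.refl γ ∘ D.P bs) = insert (D.P bs.reverse γ) (D.invF (D.P bs)) ∧
      D.P bs.reverse γ ∉ D.invF (D.P bs) := by
  have hγpos : γ ∈ D.Rpos := D.S_subset γ hγ
  have hnotin : D.P bs.reverse γ ∉ D.invF (D.P bs) := by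
    rw [mem_invF, D.P_inv']
    rintro ⟨-, h2⟩
    exact D.neg_not_mem_Rpos hγpos h2
  refine ⟨?_, hnotin⟩
  ext α
  rw [D.mem_invF_step hbs hγ, Finset.mem_insert]
  constructor
  · rintro (⟨h1, h2⟩ | ⟨h1, h2⟩)
    · exact Or.inl h2
    · exact Or.inr h1
  · rintro (rfl | h1)
    · exact Or.inl ⟨hpos, rfl⟩
    · refine Or.inr ⟨h1, ?_⟩
      intro heq
      rw [heq] at h1
      rw [mem_invF] at h1
      exact D.neg_not_mem_Rpos hpos h1.1
  
open Classical in
lemma invF_erase {bs : List V} (hbs : ∀ γ' ∈ bs, γ' ∈ D.S) {γ : V} (hγ : γ ∈ D.S)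
    (hneg : -(D.P bs.reverse γ) ∈ D.Rpos) :
    D.invF (D.refl γ ∘ D.P bs) = (D.invF (D.P bs)).erase (-(D.P bs.reverse γ)) ∧
      -(D.P bs.reverse γ) ∈ D.invF (D.P bs) := by
  have hin : -(D.P bs.reverse γ) ∈ D.invF (D.P bs) := by
    rw [mem_invF, D.P_neg, D.P_inv', neg_neg]
    exact ⟨hneg, D.S_subset γ hγ⟩
  refine ⟨?_, hin⟩
  ext α
  rw [D.mem_invF_step hbs hγ, Finset.mem_erase]
  constructor
  · rintro (⟨h1, rfl⟩ | ⟨h1, h2⟩)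
    · exact absurd h1 (by simpa using D.neg_not_mem_Rpos hneg)
    · exact ⟨h2, h1⟩
  · rintro ⟨h1, h2⟩
    exact Or.inr ⟨h2, h1⟩

open Classical in
lemma card_invF_P_le {bs : List V} (hbs : ∀ γ ∈ bs, γ ∈ D.S) :
    (D.invF (D.P bs)).card ≤ bs.length := by
  induction bs with
  | nil => simp
  | cons γ tl ih =>
      have htl : ∀ γ' ∈ tl, γ' ∈ D.S := fun γ' h => hbs γ' (List.mem_cons_of_mem γ h)
      have hγ : γ ∈ D.S := hbs γ List.mem_cons_self
      have hγR : γ ∈ D.R := D.Rpos_subset γ (D.S_subset γ hγ)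
      have hroot : D.P tl.reverse γ ∈ D.R :=
        D.P_root (fun γ' h => D.Rpos_subset γ' (D.S_subset γ'
          (htl γ' (List.mem_reverse.mp h)))) hγR
      rw [P_cons]
      rcases D.pos_or_neg _ hroot with h1 | h1
      · rw [(D.invF_insert htl hγ h1).1]
        calc (insert (D.P tl.reverse γ) (D.invF (D.P tl))).card
            ≤ (D.invF (D.P tl)).card + 1 := Finset.card_insert_le _ _
          _ ≤ tl.length + 1 := by have := ih htl; omega
      · rw [(D.invF_erase htl hγ h1).1]
        calc ((D.invF (D.P tl)).erase (-(D.P tl.reverse γ))).card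
            ≤ (D.invF (D.P tl)).card := Finset.card_erase_le
          _ ≤ tl.length + 1 := by have := ih htl; omega

lemma card_invF_le_len {g : V → V} (h : D.MemW g) :
    (D.invF g).card ≤ D.len g := by
  have hne : {t | D.IsWord g t}.Nonempty := h
  have hmem : D.IsWord g (D.len g) := Nat.sInf_mem hne
  obtain ⟨bs, hlen, hbs, rfl⟩ := D.exists_list_of_isWord hmem
  rw [← hlen]
  exact D.card_invF_P_le hbs



/-! ### The deletion argument -/

lemma exists_transition {Q : ℕ → Prop} {l : ℕ} (h0 : ¬ Q 0) (hl : Q l) :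
    ∃ k < l, ¬ Q k ∧ Q (k + 1) := by
  induction l with
  | zero => exact absurd hl h0
  | succ n ih =>
      by_cases hn : Q n
      · obtain ⟨k, hk, h⟩ := ih hn
        exact ⟨k, Nat.lt_succ_of_lt hk, h⟩
      · exact ⟨n, Nat.lt_succ_self n, hn, hl⟩

lemma deletion {b : ℕ → V} {l : ℕ} (hbl : ∀ m ≤ l, b m ∈ D.S)
    (hneg : -(D.P ((List.range l).map b) (b l)) ∈ D.Rpos) :
    ∃ bs' : List V, bs'.length + 2 = l + 1 ∧ (∀ γ ∈ bs', γ ∈ D.S) ∧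
      D.P ((List.range (l + 1)).map b) = D.P bs' := by
  have hblR : ∀ m ≤ l, b m ∈ D.R := fun m hm =>
    D.Rpos_subset _ (D.S_subset _ (hbl m hm))
  set v : ℕ → V := fun m => D.P ((List.range' m (l - m)).map b) (b l) with hv
  have hv0 : v 0 = D.P ((List.range l).map b) (b l) := by
    rw [hv]; simp [List.range_eq_range']
  have hvl : v l ∈ D.Rpos := by
    rw [hv]; simp only [Nat.sub_self, List.range'_zero, List.map_nil, P_nil, id_eq]
    exact D.S_subset _ (hbl l le_rfl)
  have hQ0 : ¬ (v 0 ∈ D.Rpos) := by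
    rw [hv0]
    intro h
    exact D.neg_not_mem_Rpos h hneg
  obtain ⟨k, hkl, hk0, hk1⟩ := exists_transition (Q := fun m => v m ∈ D.Rpos) hQ0 hvl
  have hstep : ∀ m, m < l → v m = D.refl (b m) (v (m + 1)) := by
    intro m hm
    rw [hv]
    simp only
    have h1 : l - m = (l - (m + 1)) + 1 := by omega
    rw [h1]
    rfl
  have hqlet : ∀ γ ∈ (List.range' (k + 1) (l - (k + 1))).map b, γ ∈ D.S := by
    intro γ hγ
    obtain ⟨m, hm, rfl⟩ := List.mem_map.mp hγ
    rw [List.mem_range'_1] at hm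
    exact hbl m (by omega)
  have hv1R : v (k + 1) ∈ D.R := by
    rw [hv]
    exact D.P_root (fun γ h => D.Rpos_subset _ (D.S_subset _ (hqlet γ h)))
      (hblR l le_rfl)
  have hvbk : v (k + 1) = b k := by
    by_contra hne
    exact hk0 (by
      rw [hstep k hkl]
      exact D.refl_simple_pos (hbl k (by omega)) hk1 hne)
  set q : V → V := D.P ((List.range' (k + 1) (l - (k + 1))).map b) with hq
  have hconj : ∀ x, q (D.refl (b l) x) = D.refl (b k) (q x) := by
    intro x
    have h1 := D.refl_conj (b l) q (D.P_add _) (D.P_smul _) (D.P_inner _) x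
    rw [h1]
    have : q (b l) = b k := hvbk
    rw [this]
  have hsplitN : List.range (l + 1)
      = (List.range' 0 k ++ [k]) ++ List.range' (k + 1) (l - (k + 1)) ++ [l] := by
    have e1 : List.range' 0 (k + 1) = List.range' 0 k ++ [k] := by
      have := List.range'_concat (step := 1) (s := 0) (n := k)
      simpa using this
    have e2 : List.range' 0 (k + 1) ++ List.range' (k + 1) (l - (k + 1))
        = List.range' 0 l := by
      have := List.range'_append (step := 1) (s := 0) (m := k + 1) (n := l - (k + 1))
      simp only [Nat.one_mul, Nat.zero_add] at this
      rw [this]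
      congr 1
      omega
    have e3 : List.range' 0 l ++ [l] = List.range' 0 (l + 1) := by
      have := List.range'_concat (step := 1) (s := 0) (n := l)
      simpa using this.symm
    rw [List.range_eq_range', ← e3, ← e2, e1]
  refine ⟨(List.range' 0 k).map b ++ (List.range' (k + 1) (l - (k + 1))).map b,
    ?_, ?_, ?_⟩
  · simp only [List.length_append, List.length_map, List.length_range']
    omega
  · intro γ hγ
    rcases List.mem_append.mp hγ with h | h
    · obtain ⟨m, hm, rfl⟩ := List.mem_map.mp h
      rw [List.mem_range'_1] at hm
      exact hbl m (by omega)
    · exact hqlet γ h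
  · funext x
    rw [hsplitN]
    simp only [List.map_append, P_append, Function.comp_apply]
    have hx1 : D.P ([l].map b) x = D.refl (b l) x := rfl
    have hx2 : D.P ([k].map b) (q (D.refl (b l) x)) = q x := by
      rw [hconj]
      show D.refl (b k) (D.refl (b k) (q x)) = q x
      exact D.refl_refl _ _
    rw [hx1]
    show D.P ((List.range' 0 k).map b) (D.P ([k].map b)
      (q (D.refl (b l) x))) = _
    rw [hx2]

end RootSystemWithBase

/-- Fix a simple root `β₀ ∈ S` (the vertex `j`).  Let
`(i₁,…,i_t)` be a sequence of indices of simple roots, encoded here by the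
sequence of simple roots `b 0, …, b (t-1)`.  Put `w_l := s_{i_l} ⋯ s_{i₁}`
(so `w 0 = id`, `w (l+1) = s_{b l} ∘ w l`) and define the roots
`α̃_l := s_{i₁} ⋯ s_{i_l}(α_{i_{l+1}})`, i.e. `α̃ l = u l (b l)` where
`u 0 = id` and `u (l+1) = u l ∘ s_{b l}`.  Then the following are
equivalent:
(a) for every `0 ≤ l < t` the coefficient of `β₀` in the expansion of
`α̃_l` in the base `S` is strictly positive;
(b) for every `1 ≤ l ≤ t`, `w_l ∈ W^j` and `s_{i_l} ⋯ s_{i₁}` is reduced,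
i.e. `len (w_l) = l`. -/
theorem modified_kostant_game_iff_reduced_word {V : Type*}
    [NormedAddCommGroup V] [InnerProductSpace ℝ V] [FiniteDimensional ℝ V]
    (D : RootSystemWithBase V) (β0 : V) (hβ0 : β0 ∈ D.S)
    (t : ℕ) (b : ℕ → V) (hb : ∀ l < t, b l ∈ D.S)
    (w u : ℕ → V → V)
    (hw0 : w 0 = id) (hwsucc : ∀ l, w (l + 1) = D.refl (b l) ∘ w l)
    (hu0 : u 0 = id) (husucc : ∀ l, u (l + 1) = u l ∘ D.refl (b l)) :
    ((∀ l < t, 0 < D.coeff (u l (b l)) β0) ↔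
      (∀ l, 1 ≤ l → l ≤ t → w l ∈ D.Wj β0 ∧ D.len (w l) = l)) := by
  classical
  set cs : ℕ → List V := fun l => (List.range l).map b with hcs
  have hcs_len : ∀ l, (cs l).length = l := by
    intro l; simp [hcs]
  have hcs_succ : ∀ l, cs (l + 1) = cs l ++ [b l] := by
    intro l
    simp only [hcs]
    rw [List.range_succ, List.map_append, List.map_singleton]
  have key : ∀ l, l ≤ t →
      (∀ γ ∈ (cs l).reverse, γ ∈ D.S) ∧ w l = D.P (cs l).reverse ∧
        u l = D.P (cs l) := by
    intro l
    induction l with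
    | zero =>
        intro _
        refine ⟨by simp [hcs], ?_, ?_⟩
        · rw [hw0]; simp [hcs]
        · rw [hu0]; simp [hcs]
    | succ n ih =>
        intro hn
        obtain ⟨hlet, hwn, hun⟩ := ih (by omega)
        have hbn : b n ∈ D.S := hb n (by omega)
        have hrev : (cs (n + 1)).reverse = b n :: (cs n).reverse := by
          rw [hcs_succ]; simp
        refine ⟨?_, ?_, ?_⟩
        · intro γ hγ
          rw [hrev] at hγ
          rcases List.mem_cons.mp hγ with rfl | h
          · exact hbn
          · exact hlet γ h
        · rw [hwsucc n, hwn, hrev, D.P_cons]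
        · rw [husucc n, hun, hcs_succ, D.P_append]
          rfl
  have hlet' : ∀ l, l ≤ t → ∀ γ ∈ cs l, γ ∈ D.S := by
    intro l hl γ hγ
    exact (key l hl).1 γ (List.mem_reverse.mpr hγ)
  have hroot : ∀ l < t, u l (b l) ∈ D.R := by
    intro l hl
    rw [(key l (le_of_lt hl)).2.2]
    exact D.P_root (fun γ h => D.Rpos_subset _ (D.S_subset _ (hlet' l (le_of_lt hl) γ h)))
      (D.Rpos_subset _ (D.S_subset _ (hb l hl)))
  -- the insertion step, valid whenever the new root is positive
  have hstep : ∀ l < t, u l (b l) ∈ D.Rpos →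
      D.invF (w (l + 1)) = insert (u l (b l)) (D.invF (w l)) ∧
        u l (b l) ∉ D.invF (w l) := by
    intro l hl hpos
    obtain ⟨hlet, hwl, hul⟩ := key l (le_of_lt hl)
    have hrr : ((cs l).reverse).reverse = cs l := List.reverse_reverse _
    have h1 := D.invF_insert (bs := (cs l).reverse) hlet (hb l hl)
      (by rw [hrr, ← hul]; exact hpos)
    rw [hrr, ← hul, ← hwl] at h1
    rw [hwsucc l, hwl]
    rw [← hwl]
    exact h1
  constructor
  · -- (a) → (b)
    intro ha
    have inv : ∀ l, l ≤ t → (D.invF (w l)).card = l ∧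
        ∀ α ∈ D.invF (w l), 0 < D.coeff α β0 := by
      intro l
      induction l with
      | zero =>
          intro _
          rw [hw0]
          simp
      | succ n ih =>
          intro hn
          obtain ⟨hcard, hpos⟩ := ih (by omega)
          have hnt : n < t := by omega
          have hc : 0 < D.coeff (u n (b n)) β0 := ha n hnt
          have hR : u n (b n) ∈ D.R := hroot n hnt
          have hRpos : u n (b n) ∈ D.Rpos := D.mem_Rpos_of_coeff_pos hR hβ0 hc
          obtain ⟨heq, hnotin⟩ := hstep n hnt hRpos
          rw [heq]
          constructor
          · rw [Finset.card_insert_of_notMem hnotin, hcard]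
          · intro α hα
            rcases Finset.mem_insert.mp hα with rfl | h
            · exact hc
            · exact hpos α h
    intro l hl1 hlt
    obtain ⟨hlet, hwl, hul⟩ := key l hlt
    have hword : D.IsWord (w l) l := by
      rw [hwl]
      have := D.isWord_P hlet
      rwa [List.length_reverse, hcs_len] at this
    have hmemW : D.MemW (w l) := ⟨l, hword⟩
    refine ⟨⟨hmemW, ?_⟩, ?_⟩
    · intro α hα hspan
      rw [D.inversions_eq, Finset.mem_coe] at hα
      have h0 : 0 < D.coeff α β0 := (inv l hlt).2 α hα
      have hαR : α ∈ D.R := D.Rpos_subset _ (D.mem_invF.mp hα).1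
      have := D.coeff_zero_of_mem_span hαR hβ0 hspan
      omega
    · refine le_antisymm (Nat.sInf_le hword) ?_
      have h1 := D.card_invF_le_len hmemW
      rw [(inv l hlt).1] at h1
      exact h1
  · -- (b) → (a)
    intro hbw l hl
    have hR : u l (b l) ∈ D.R := hroot l hl
    rcases D.pos_or_neg _ hR with hpos | hneg
    · obtain ⟨heq, -⟩ := hstep l hl hpos
      have hmem : u l (b l) ∈ D.invF (w (l + 1)) := by
        rw [heq]; exact Finset.mem_insert_self _ _
      have hWj := (hbw (l + 1) (by omega) (by omega)).1
      have hnot := hWj.2 (u l (b l))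
        (by rw [D.inversions_eq, Finset.mem_coe]; exact hmem)
      have hge : 0 ≤ D.coeff (u l (b l)) β0 :=
        (D.mem_Rpos_iff _ hR).mp hpos β0 hβ0
      rcases lt_or_eq_of_le hge with h | h
      · exact h
      · exact absurd (D.mem_span_of_coeff_zero hR hβ0 h.symm) hnot
    · exfalso
      rcases Nat.eq_zero_or_pos l with rfl | hl1
      · have : u 0 (b 0) = b 0 := by rw [hu0]; rfl
        rw [this] at hneg
        exact D.neg_not_mem_Rpos (D.S_subset _ (hb 0 hl)) hneg
      · have hbl : ∀ m ≤ l, b m ∈ D.S := fun m hm => hb m (by omega)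
        have hneg' : -(D.P ((List.range l).map b) (b l)) ∈ D.Rpos := by
          rw [show (List.range l).map b = cs l from rfl, ← (key l (le_of_lt hl)).2.2]
          exact hneg
        obtain ⟨bs', hlen', hlet', heq'⟩ := D.deletion hbl hneg'
        obtain ⟨hletl, hwl, hul⟩ := key (l + 1) hl
        have hu_eq : u (l + 1) = D.P bs' := by
          rw [hul]
          exact heq'
        -- `w (l+1)` is the inverse of `u (l+1)`, hence equals `P bs'.reverse`
        have hw_eq : w (l + 1) = D.P bs'.reverse := by
          funext x
          have h1 : u (l + 1) (w (l + 1) x) = x := by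
            rw [hul, hwl, D.P_inv']
          have h2 : u (l + 1) (D.P bs'.reverse x) = x := by
            rw [hu_eq, D.P_inv']
          have hinj : Function.Injective (u (l + 1)) := by
            intro a a' haa
            have ha1 : D.P (cs (l + 1)).reverse (u (l + 1) a)
                = D.P (cs (l + 1)).reverse (u (l + 1) a') := by rw [haa]
            rwa [hul, D.P_inv, D.P_inv] at ha1
          exact hinj (h1.trans h2.symm)
        have hlen_le : D.len (w (l + 1)) ≤ bs'.length := by
          rw [hw_eq]
          have hrev : ∀ γ ∈ bs'.reverse, γ ∈ D.S := fun γ h =>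
            hlet' γ (List.mem_reverse.mp h)
          have := D.len_le_of_P hrev
          rwa [List.length_reverse] at this
        have hlen_eq : D.len (w (l + 1)) = l + 1 :=
          (hbw (l + 1) (by omega) (by omega)).2
        omega
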